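/- The Gaussian solitary wave ϱ_c(x) = exp(1/2 + (1−c²)/p)·exp(−px²/4) satisfies the energy identity −(ϱ_c')²/2 + ((1−c²)/2 + p/4)ϱ_c² − (p/2)(log ϱ_c)ϱ_c² = 0 for all x ∈ ℝ. -/
import Mathlib


/-- The Gaussian solitary wave `ϱ_c(x) = exp(1/2 + (1−c²)/p) exp(−px²/4)`
satisfies the energy identity
`−(ϱ_c')²/2 + ((1−c²)/2 + p/4)ϱ_c² − (p/2)(log ϱ_c)ϱ_c² = 0` for all `x`. -/
theorem stmt10 (c : ℝ) (p : ℕ) (hp : 0 < p) :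
    ∀ x : ℝ,
      -(deriv (fun y : ℝ =>
          Real.exp (1/2 + (1 - c^2)/(p : ℝ)) * Real.exp (-(p : ℝ) * y^2 / 4)) x)^2 / 2 +
        ((1 - c^2)/2 + (p : ℝ)/4) *
          (Real.exp (1/2 + (1 - c^2)/(p : ℝ)) * Real.exp (-(p : ℝ) * x^2 / 4))^2 -
        ((p : ℝ)/2) * Real.log (Real.exp (1/2 + (1 - c^2)/(p : ℝ)) *
            Real.exp (-(p : ℝ) * x^2 / 4)) *
          (Real.exp (1/2 + (1 - c^2)/(p : ℝ)) * Real.exp (-(p : ℝ) * x^2 / 4))^2 = 0 := by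
  intro x
  have hpne : (p : ℝ) ≠ 0 := Nat.cast_ne_zero.mpr hp.ne'
  set A : ℝ := Real.exp (1/2 + (1 - c^2)/(p : ℝ)) with hA
  have h1 : HasDerivAt (fun y : ℝ => -(p : ℝ) * y^2 / 4)
      (-(p : ℝ) * (2 * x) / 4) x := by
    have := ((hasDerivAt_pow 2 x).const_mul (-(p : ℝ))).div_const 4
    simpa using this
  have h2 : HasDerivAt (fun y : ℝ => A * Real.exp (-(p : ℝ) * y^2 / 4))
      (A * (Real.exp (-(p : ℝ) * x^2 / 4) * (-(p : ℝ) * (2 * x) / 4))) x :=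
    (h1.exp).const_mul A
  rw [h2.deriv]
  rw [Real.log_mul (Real.exp_pos _).ne' (Real.exp_pos _).ne', Real.log_exp, Real.log_exp]
  field_simp
  ring
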